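/- If φ : u_n → u_n is an injective Lie algebra homomorphism, then for each i = 1,...,n there exist λᵢ ∈ K* and uᵢ ∈ u_{n,i+1} such that φ(∂ᵢ) = λᵢ∂ᵢ + uᵢ. In particular φ(∂ₙ) = λₙ∂ₙ. -/

import Mathlib

open MvPolynomial

noncomputable section

/-- The polynomial algebra `Pₙ = K[x₀,…,x_{n-1}]`. -/
abbrev Pn (K : Type) [Field K] (n : ℕ) : Type := MvPolynomial (Fin n) K

/-- The Lie algebra of `K`-derivations of `Pₙ`. -/
abbrev DerPn (K : Type) [Field K] (n : ℕ) : Type :=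
  Derivation K (Pn K n) (Pn K n)

/-- The subalgebra `P_j = K[x₀,…,x_{j-1}]` of `Pₙ` (0-indexed: variables with index `< j`). -/
def Psub (K : Type) [Field K] (n j : ℕ) : Subalgebra K (Pn K n) :=
  MvPolynomial.supported K {k : Fin n | (k : ℕ) < j}

/-- The subspace `u_{n,i} = Σ_{j=i}^n P_{j-1}∂_j` (1-indexed `i`; `U K n 1 = u_n`).
A derivation `D` lies in it iff `D(x_j) ∈ P_{j-1}` for all `j` and `D(x_j) = 0` for `j < i`
(0-indexed: `D (X j) = 0` when `(j:ℕ)+1 < i`). -/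
def U (K : Type) [Field K] (n i : ℕ) : Submodule K (DerPn K n) where
  carrier := {D | ∀ j : Fin n, D (X j) ∈ Psub K n j ∧ ((j : ℕ) + 1 < i → D (X j) = 0)}
  add_mem' := by
    intro a b ha hb j
    refine ⟨?_, fun h => ?_⟩
    · simpa using Subalgebra.add_mem _ (ha j).1 (hb j).1
    · simp [(ha j).2 h, (hb j).2 h]
  zero_mem' := by
    intro j
    refine ⟨by simpa using (Psub K n j).zero_mem, fun _ => rfl⟩
  smul_mem' := by
    intro c a ha j
    refine ⟨?_, fun h => ?_⟩
    · simpa using Subalgebra.smul_mem _ (ha j).1 c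
    · simp [(ha j).2 h]

/-- The span of all brackets `⁅a,b⁆` with `a ∈ A`, `b ∈ B`. -/
def lieSpan (K : Type) [Field K] (n : ℕ) (A B : Submodule K (DerPn K n)) :
    Submodule K (DerPn K n) :=
  Submodule.span K {x | ∃ a ∈ A, ∃ b ∈ B, x = ⁅a, b⁆}

/-- The derived series of a subspace `G`: `G_{(0)} = G`, `G_{(i+1)} = [G_{(i)}, G_{(i)}]`. -/
def derivedSub (K : Type) [Field K] (n : ℕ) (G : Submodule K (DerPn K n)) : ℕ → Submodule K (DerPn K n)
  | 0 => G
  | i + 1 => lieSpan K n (derivedSub K n G i) (derivedSub K n G i)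

section Lemmas

variable {K : Type} [Field K] [CharZero K] {n : ℕ}
set_option linter.unusedSectionVars false
set_option linter.unusedVariables false

lemma mem_U {D : DerPn K n} {i : ℕ} :
    D ∈ U K n i ↔ ∀ j : Fin n, D (X j) ∈ Psub K n j ∧ ((j : ℕ) + 1 < i → D (X j) = 0) :=
  Iff.rfl

lemma U_le_U1 {i : ℕ} : U K n i ≤ U K n 1 := by
  intro D hD j
  exact ⟨(hD j).1, fun h => absurd h (by omega)⟩

lemma Psub_mono {j j' : ℕ} (h : j ≤ j') : Psub K n j ≤ Psub K n j' :=
  supported_mono (fun k hk => lt_of_lt_of_le hk h)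

/-- a derivation vanishing on `X k`, `k ∈ s`, vanishes on `supported K s`. -/
lemma deriv_vanish {D : DerPn K n} {s : Set (Fin n)} (h : ∀ k ∈ s, D (X k) = 0)
    {p : Pn K n} (hp : p ∈ supported K s) : D p = 0 := by
  rw [supported_eq_adjoin_X] at hp
  induction hp using Algebra.adjoin_induction with
  | mem x hx => obtain ⟨k, hk, rfl⟩ := hx; exact h k hk
  | algebraMap r => exact D.map_algebraMap r
  | add x y _ _ hx hy => simp [hx, hy]
  | mul x y _ _ hx hy => simp [Derivation.leibniz, hx, hy]

lemma deriv_mem_psub {D : DerPn K n} (hD : D ∈ U K n 1) {j : ℕ} {p : Pn K n}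
    (hp : p ∈ Psub K n j) : D p ∈ Psub K n j := by
  rw [Psub, supported_eq_adjoin_X] at hp
  induction hp using Algebra.adjoin_induction with
  | mem x hx =>
      obtain ⟨k, hk, rfl⟩ := hx
      exact Psub_mono (by exact_mod_cast le_of_lt hk) ((hD k).1)
  | algebraMap r => simp [D.map_algebraMap]
  | add x y _ _ hx hy => simp only [map_add]; exact Subalgebra.add_mem _ hx hy
  | mul x y hx' hy' hx hy =>
      rw [Derivation.leibniz, smul_eq_mul, smul_eq_mul]
      have hx'' : x ∈ Psub K n j := by rw [Psub, supported_eq_adjoin_X]; exact hx'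
      have hy'' : y ∈ Psub K n j := by rw [Psub, supported_eq_adjoin_X]; exact hy'
      exact Subalgebra.add_mem _ (Subalgebra.mul_mem _ hx'' hy) (Subalgebra.mul_mem _ hy'' hx)

/-- key cancellation: `D₁` kills `D₂ (X j)` as soon as all its components below `j` vanish. -/
lemma vanish_lt {a : ℕ} {D₁ D₂ : DerPn K n} (h₁ : D₁ ∈ U K n a) (h₂ : D₂ ∈ U K n 1)
    {j : Fin n} (hj : (j : ℕ) < a) : D₁ (D₂ (X j)) = 0 :=
  deriv_vanish (fun k hk => (h₁ k).2 (by simp only [Set.mem_setOf_eq] at hk; omega)) ((h₂ j).1)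

lemma bracket_mem_U {a b : ℕ} {D₁ D₂ : DerPn K n} (h₁ : D₁ ∈ U K n a) (h₂ : D₂ ∈ U K n b) :
    ⁅D₁, D₂⁆ ∈ U K n (min a b + 1) := by
  intro j
  rw [Derivation.commutator_apply]
  constructor
  · exact Subalgebra.sub_mem _ (deriv_mem_psub (U_le_U1 h₁) ((U_le_U1 h₂ j).1))
      (deriv_mem_psub (U_le_U1 h₂) ((U_le_U1 h₁ j).1))
  · intro hj
    rw [vanish_lt h₁ (U_le_U1 h₂) (by omega), vanish_lt h₂ (U_le_U1 h₁) (by omega), sub_zero]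

lemma lieSpan_le_U {a b : ℕ} {A B : Submodule K (DerPn K n)} (hA : A ≤ U K n a)
    (hB : B ≤ U K n b) : lieSpan K n A B ≤ U K n (min a b + 1) := by
  rw [lieSpan, Submodule.span_le]
  rintro x ⟨c, hc, d, hd, rfl⟩
  exact bracket_mem_U (hA hc) (hB hd)

lemma derived_le_U (k : ℕ) : derivedSub K n (U K n 1) k ≤ U K n (k + 1) := by
  induction k with
  | zero => exact le_rfl
  | succ k ih =>
      have := lieSpan_le_U (K := K) (n := n) ih ih
      rw [min_self] at this
      exact this

lemma derived_le_U1 (k : ℕ) : derivedSub K n (U K n 1) k ≤ U K n 1 :=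
  le_trans (derived_le_U k) U_le_U1

/-- formal integration with respect to `x_k`. -/
def intg (k : Fin n) (p : Pn K n) : Pn K n :=
  ∑ α ∈ p.support, monomial (α + Finsupp.single k 1) (coeff α p / (α k + 1))

lemma pderiv_intg (k : Fin n) (p : Pn K n) : pderiv k (intg k p) = p := by
  rw [intg, map_sum]
  conv_rhs => rw [p.as_sum]
  refine Finset.sum_congr rfl fun α hα => ?_
  rw [pderiv_monomial]
  have hsub : (α + Finsupp.single k 1) - Finsupp.single k 1 = α := by
    ext m
    rw [Finsupp.tsub_apply, Finsupp.add_apply]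
    omega
  rw [hsub, Finsupp.add_apply, Finsupp.single_apply, if_pos rfl]
  push_cast
  rw [div_mul_cancel₀ _ (Nat.cast_add_one_ne_zero (α k))]

lemma intg_mem_supported {k : Fin n} {s : Set (Fin n)} (hk : k ∈ s) {p : Pn K n}
    (hp : p ∈ supported K s) : intg k p ∈ supported K s := by
  classical
  rw [mem_supported] at hp ⊢
  intro m hm
  rw [Finset.mem_coe] at hm
  rw [intg] at hm
  have := vars_sum_subset (σ := Fin n) (R := K)
    (t := p.support) (φ := fun α => monomial (α + Finsupp.single k 1) (coeff α p / (α k + 1)))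
  have hm' := this hm
  rw [Finset.mem_biUnion] at hm'
  obtain ⟨α, hα, hmem⟩ := hm'
  by_cases hc : (coeff α p / (α k + 1) : K) = 0
  · rw [hc] at hmem; simp at hmem
  · rw [vars_monomial hc] at hmem
    have := Finsupp.support_add (g₁ := α) (g₂ := Finsupp.single k 1) hmem
    rw [Finset.mem_union] at this
    rcases this with h | h
    · exact hp (by rw [Finset.mem_coe, mem_vars]; exact ⟨α, hα, h⟩)
    · have : m = k := by simpa using Finsupp.support_single_subset h
      exact this ▸ hk

lemma smul_pderiv_apply (p : Pn K n) (j m : Fin n) :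
    (p • pderiv j : DerPn K n) (X m) = if j = m then p else 0 := by
  classical
  by_cases h : j = m
  · subst h; simp [Derivation.smul_apply]
  · simp [Derivation.smul_apply, pderiv_X_of_ne (Ne.symm h), h]

lemma smul_pderiv_mem_U1 {p : Pn K n} {j : Fin n} (hp : p ∈ Psub K n j) :
    (p • pderiv j : DerPn K n) ∈ U K n 1 := by
  intro m
  refine ⟨?_, fun h => absurd h (by omega)⟩
  rw [smul_pderiv_apply]
  split_ifs with h
  · exact h ▸ hp
  · exact Subalgebra.zero_mem _

/-- Every `p∂ⱼ` with `p ∈ P_j` lies in the `k`-th derived subalgebra whenever `k ≤ j`. -/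
lemma smul_pderiv_mem_derived :
    ∀ (k : ℕ) (j : Fin n), k ≤ (j : ℕ) → ∀ p ∈ Psub K n j,
      (p • pderiv j : DerPn K n) ∈ derivedSub K n (U K n 1) k := by
  intro k
  induction k with
  | zero => intro j _ p hp; exact smul_pderiv_mem_U1 hp
  | succ k ih =>
      intro j hkj p hp
      have hkn : k < n := lt_of_lt_of_le (by omega) j.2.le
      set k' : Fin n := ⟨k, hkn⟩ with hk'
      have hkj' : (k' : ℕ) < (j : ℕ) := by simp [hk']; omega
      set q : Pn K n := intg k' p with hq
      have hq_mem : q ∈ Psub K n j := intg_mem_supported (by exact hkj') hp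
      have key : (p • pderiv j : DerPn K n) = ⁅(pderiv k' : DerPn K n), q • pderiv j⁆ := by
        apply derivation_ext
        intro m
        rw [Derivation.commutator_apply, smul_pderiv_apply]
        rw [smul_pderiv_apply]
        have hk'j : k' ≠ j := Fin.ne_of_val_ne (by omega)
        by_cases hm : j = m
        · subst hm
          rw [if_pos rfl, if_pos rfl, pderiv_X_of_ne hk'j.symm, map_zero, sub_zero, hq,
            pderiv_intg]
        · rw [if_neg hm, if_neg hm, map_zero, zero_sub, eq_comm, neg_eq_zero]
          by_cases hmk : m = k'
          · subst hmk
            rw [pderiv_X_self]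
            simp
          · rw [pderiv_X_of_ne hmk, map_zero]
      rw [key]
      apply Submodule.subset_span
      refine ⟨_, ?_, _, ih j (by omega) q hq_mem, rfl⟩
      have h1 : (1 : Pn K n) ∈ Psub K n (k' : ℕ) := Subalgebra.one_mem _
      have h2 : k ≤ (k' : ℕ) := Nat.le_refl k
      have h3 := ih k' h2 (1 : Pn K n) h1
      rwa [one_smul (Pn K n)] at h3

lemma pderiv_mem_derived (j : Fin n) :
    (pderiv j : DerPn K n) ∈ derivedSub K n (U K n 1) (j : ℕ) := by
  have := smul_pderiv_mem_derived (j : ℕ) j le_rfl (1 : Pn K n) (Subalgebra.one_mem _)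
  rwa [one_smul (Pn K n)] at this

lemma pderiv_mem_U1 (j : Fin n) : (pderiv j : DerPn K n) ∈ U K n 1 :=
  U_le_U1 (derived_le_U _ (pderiv_mem_derived j))

lemma X_mem_psub {k : Fin n} {j : ℕ} (h : (k : ℕ) < j) : (X k : Pn K n) ∈ Psub K n j := by
  rw [Psub, X_mem_supported]
  exact h

lemma pderiv_ne_zero {k : Fin n} {p : Pn K n} (hk : k ∈ p.vars) : pderiv k p ≠ 0 := by
  obtain ⟨α, hα, hkα⟩ := (mem_vars k).1 hk
  have hαk : α k ≠ 0 := Finsupp.mem_support_iff.1 hkα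
  intro h0
  have hcoeff : coeff (α - Finsupp.single k 1) (pderiv k p) = coeff α p * (α k : K) := by
    conv_lhs => rw [p.as_sum, map_sum, coeff_sum]
    rw [Finset.sum_eq_single α]
    · rw [pderiv_monomial, coeff_monomial, if_pos rfl]
    · intro β hβ hne
      rw [pderiv_monomial, coeff_monomial]
      split_ifs with he
      · by_cases hβk : β k = 0
        · simp [hβk]
        · exfalso
          apply hne
          have hle1 : Finsupp.single k 1 ≤ β := by
            rw [Finsupp.single_le_iff]; omega
          have hle2 : Finsupp.single k 1 ≤ α := by
            rw [Finsupp.single_le_iff]; omega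
          rw [← tsub_add_cancel_of_le hle1, ← tsub_add_cancel_of_le hle2, he]
      · rfl
    · intro h; exact absurd hα h
  rw [h0, coeff_zero] at hcoeff
  have h1 : coeff α p ≠ 0 := Finsupp.mem_support_iff.1 hα
  have h2 : ((α k : ℕ) : K) ≠ 0 := Nat.cast_ne_zero.2 hαk
  exact (mul_ne_zero h1 h2) hcoeff.symm

lemma psub_drop {k : Fin n} {p : Pn K n} (hp : p ∈ Psub K n ((k : ℕ) + 1))
    (h : pderiv k p = 0) : p ∈ Psub K n (k : ℕ) := by
  rw [Psub, mem_supported] at hp ⊢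
  intro m hm
  have hmk : m ≠ k := by
    intro he
    subst he
    exact pderiv_ne_zero (Finset.mem_coe.1 hm) h
  have h1 := hp hm
  simp only [Set.mem_setOf_eq] at h1 ⊢
  have h2 : (m : ℕ) ≠ (k : ℕ) := fun he => hmk (Fin.ext he)
  omega

lemma const_of_killed : ∀ (t : ℕ), t ≤ n → ∀ (a : Pn K n), a ∈ Psub K n t →
    (∀ j : Fin n, (j : ℕ) < t → ∃ lam : K, lam ≠ 0 ∧ ∃ u ∈ U K n ((j : ℕ) + 2),
      (lam • pderiv j + u : DerPn K n) a = 0) → ∃ c : K, a = C c := by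
  intro t
  induction t with
  | zero =>
      intro _ a ha _
      have hempty : ({k : Fin n | (k : ℕ) < 0} : Set (Fin n)) = ∅ := by ext m; simp
      rw [Psub, hempty, supported_empty, Algebra.mem_bot] at ha
      obtain ⟨c, hc⟩ := ha
      exact ⟨c, hc.symm⟩
  | succ t ih =>
      intro htn a ha h
      have htn' : t < n := htn
      obtain ⟨lam, hlam, u, hu, heq⟩ := h ⟨t, htn'⟩ (by simp)
      have ha' : a ∈ supported K {k : Fin n | (k : ℕ) < t + 1} := ha
      have hua : u a = 0 := by
        refine deriv_vanish (fun m hm => (hu m).2 ?_) ha'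
        simp only [Set.mem_setOf_eq] at hm
        simp only [Fin.val_mk]
        omega
      rw [Derivation.add_apply, Derivation.smul_apply, hua, add_zero] at heq
      have hpd : pderiv (⟨t, htn'⟩ : Fin n) a = 0 := by
        rcases smul_eq_zero.mp heq with h' | h'
        · exact absurd h' hlam
        · exact h'
      have hdrop : a ∈ Psub K n t := psub_drop (k := ⟨t, htn'⟩) ha hpd
      exact ih (Nat.le_of_succ_le htn) a hdrop (fun m hm => h m (by omega))

lemma eq_zero_of_mem_U_top {D : DerPn K n} (h : D ∈ U K n (n + 1)) : D = 0 :=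
  derivation_ext fun j => by rw [(h j).2 (by omega)]; rfl

lemma deriv_pderiv_X (D : DerPn K n) (i m : Fin n) : D ((pderiv i : DerPn K n) (X m)) = 0 := by
  classical
  by_cases h : m = i
  · subst h; rw [pderiv_X_self]; exact D.map_one_eq_zero
  · rw [pderiv_X_of_ne h, map_zero]

lemma pderiv_bracket_zero (i j : Fin n) :
    (⁅(pderiv i : DerPn K n), (pderiv j : DerPn K n)⁆ : DerPn K n) = 0 := by
  apply derivation_ext
  intro m
  rw [Derivation.commutator_apply, deriv_pderiv_X, deriv_pderiv_X, sub_zero]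
  rfl

lemma bracket_pderiv_X_smul {k : ℕ} (hk : k + 1 < n) (k' k1 : Fin n)
    (h1 : (k' : ℕ) = k) (h2 : (k1 : ℕ) = k + 1) :
    (⁅(pderiv k' : DerPn K n), ((X k' : Pn K n) • (pderiv k1 : DerPn K n) : DerPn K n)⁆ : DerPn K n) = pderiv k1 := by
  apply derivation_ext
  intro m
  rw [Derivation.commutator_apply, smul_pderiv_apply, deriv_pderiv_X, sub_zero]
  by_cases h : k1 = m
  · subst h
    rw [if_pos rfl, pderiv_X_self, pderiv_X_self]
  · rw [if_neg h, map_zero, pderiv_X_of_ne (fun he => h he.symm)]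

end Lemmas

set_option maxHeartbeats 2000000

/-- if `φ : u_n → u_n` is an injective Lie algebra homomorphism then for
each `i`, `φ(∂ᵢ) = λᵢ∂ᵢ + uᵢ` with `λᵢ ∈ K*` and `uᵢ ∈ u_{n,i+1}` (0-indexed: `U K n ((i:ℕ)+2)`). -/
theorem phi_di (K : Type) [Field K] [CharZero K] (n : ℕ) (hn : 2 ≤ n)
    (L : LieSubalgebra K (DerPn K n)) (hL : L.toSubmodule = U K n 1)
    (φ : L →ₗ⁅K⁆ L) (hφ : Function.Injective φ) :
    ∀ (i : Fin n) (d : L), (d : DerPn K n) = pderiv i →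
      ∃ lam : K, lam ≠ 0 ∧ ∃ u : DerPn K n, u ∈ U K n ((i : ℕ) + 2) ∧
        ((φ d : L) : DerPn K n) = lam • pderiv i + u := by
  have memL : ∀ {x : DerPn K n}, x ∈ L ↔ x ∈ U K n 1 := by
    intro x
    rw [← LieSubalgebra.mem_toSubmodule, hL]
  have canL : ∀ j : Fin n, (pderiv j : DerPn K n) ∈ L := fun j => memL.mpr (pderiv_mem_U1 j)
  -- φ preserves the derived series
  have phiD : ∀ (k : ℕ) (x : L), (x : DerPn K n) ∈ derivedSub K n (U K n 1) k →
      ((φ x : L) : DerPn K n) ∈ derivedSub K n (U K n 1) k := by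
    intro k
    induction k with
    | zero => exact fun x _ => memL.mp (φ x).2
    | succ k ih =>
        intro x hx
        have main : ∀ (y : DerPn K n), y ∈ derivedSub K n (U K n 1) (k + 1) → ∀ (hyL : y ∈ L),
            ((φ ⟨y, hyL⟩ : L) : DerPn K n) ∈ derivedSub K n (U K n 1) (k + 1) := by
          intro y hy
          rw [derivedSub, lieSpan] at hy
          induction hy using Submodule.span_induction with
          | mem z hz =>
              intro hzL
              obtain ⟨a, haD, b, hbD, rfl⟩ := hz
              have haL : a ∈ L := memL.mpr (derived_le_U1 k haD)
              have hbL : b ∈ L := memL.mpr (derived_le_U1 k hbD)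
              have he : (⟨⁅a, b⁆, hzL⟩ : L) = ⁅(⟨a, haL⟩ : L), (⟨b, hbL⟩ : L)⁆ :=
                Subtype.ext rfl
              rw [he, LieHom.map_lie]
              exact Submodule.subset_span
                ⟨_, ih ⟨a, haL⟩ haD, _, ih ⟨b, hbL⟩ hbD, rfl⟩
          | zero =>
              intro h0
              have he : (⟨(0 : DerPn K n), h0⟩ : L) = 0 := Subtype.ext rfl
              rw [he, map_zero]
              exact Submodule.zero_mem _
          | add x' y' hx' hy' ihx ihy =>
              intro hxyL
              have hx'' : x' ∈ derivedSub K n (U K n 1) (k + 1) := by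
                rw [derivedSub, lieSpan]; exact hx'
              have hy'' : y' ∈ derivedSub K n (U K n 1) (k + 1) := by
                rw [derivedSub, lieSpan]; exact hy'
              have hxL : x' ∈ L := memL.mpr (derived_le_U1 (k + 1) hx'')
              have hyL : y' ∈ L := memL.mpr (derived_le_U1 (k + 1) hy'')
              have he : (⟨x' + y', hxyL⟩ : L) = ⟨x', hxL⟩ + ⟨y', hyL⟩ := Subtype.ext rfl
              rw [he, map_add]
              exact Submodule.add_mem _ (ihx hxL) (ihy hyL)
          | smul c x' hx' ihx =>
              intro hcxL
              have hx'' : x' ∈ derivedSub K n (U K n 1) (k + 1) := by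
                rw [derivedSub, lieSpan]; exact hx'
              have hxL : x' ∈ L := memL.mpr (derived_le_U1 (k + 1) hx'')
              have he : (⟨c • x', hcxL⟩ : L) = c • (⟨x', hxL⟩ : L) := Subtype.ext rfl
              rw [he, map_smul]
              exact Submodule.smul_mem _ _ (ihx hxL)
        exact main (x : DerPn K n) hx x.2
  suffices H : ∀ N : ℕ, ∀ (i : Fin n) (d : L), (i : ℕ) = N → (d : DerPn K n) = pderiv i →
      ∃ lam : K, lam ≠ 0 ∧ ∃ u : DerPn K n, u ∈ U K n ((i : ℕ) + 2) ∧
        ((φ d : L) : DerPn K n) = lam • pderiv i + u by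
    exact fun i d hd => H (i : ℕ) i d rfl hd
  intro N
  induction N using Nat.strong_induction_on with
  | _ N IH =>
    intro i d hiN hd
    have hdD : (d : DerPn K n) ∈ derivedSub K n (U K n 1) (i : ℕ) := by
      rw [hd]; exact pderiv_mem_derived i
    have hPhiU : ((φ d : L) : DerPn K n) ∈ U K n ((i : ℕ) + 1) :=
      derived_le_U _ (phiD (i : ℕ) d hdD)
    have haP : ((φ d : L) : DerPn K n) (X i) ∈ Psub K n (i : ℕ) := (hPhiU i).1
    have hkill : ∀ j : Fin n, (j : ℕ) < (i : ℕ) → ∃ lam : K, lam ≠ 0 ∧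
        ∃ u ∈ U K n ((j : ℕ) + 2),
          (lam • pderiv j + u : DerPn K n) (((φ d : L) : DerPn K n) (X i)) = 0 := by
      intro j hj
      set dj : L := ⟨pderiv j, canL j⟩ with hdj
      obtain ⟨lam, hlam, u, hu, hju⟩ := IH (j : ℕ) (by omega) j dj rfl rfl
      refine ⟨lam, hlam, u, hu, ?_⟩
      rw [← hju]
      have hbr : ⁅dj, d⁆ = (0 : L) := by
        apply Subtype.ext
        show ⁅(pderiv j : DerPn K n), (d : DerPn K n)⁆ = 0
        rw [hd]
        exact pderiv_bracket_zero j i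
      have h0 : ⁅φ dj, φ d⁆ = (0 : L) := by rw [← φ.map_lie, hbr, map_zero]
      have h0' : ⁅((φ dj : L) : DerPn K n), ((φ d : L) : DerPn K n)⁆ = (0 : DerPn K n) := by
        have h0c := congrArg Subtype.val h0
        rwa [LieSubalgebra.coe_bracket] at h0c
      have hev := congrArg (fun D : DerPn K n => D (X i)) h0'
      simp only [Derivation.commutator_apply, Derivation.zero_apply] at hev
      have h2 : ((φ d : L) : DerPn K n) (((φ dj : L) : DerPn K n) (X i)) = 0 :=
        vanish_lt hPhiU (memL.mp (φ dj).2) (by omega)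
      rw [h2, sub_zero] at hev
      exact hev
    obtain ⟨c, hc⟩ := const_of_killed (i : ℕ) i.2.le _ haP hkill
    refine ⟨c, ?_, ((φ d : L) : DerPn K n) - c • pderiv i, ?_, by abel⟩
    · -- c ≠ 0
      intro hc0
      subst hc0
      rw [map_zero] at hc
      have hDdU : ((φ d : L) : DerPn K n) ∈ U K n ((i : ℕ) + 2) := by
        intro m
        refine ⟨(hPhiU m).1, fun hm => ?_⟩
        by_cases him : m = i
        · subst him
          rw [hc]
        · have hmi : (m : ℕ) ≠ (i : ℕ) := fun he => him (Fin.ext he)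
          exact (hPhiU m).2 (by omega)
      -- the chain climbing up to ∂_{n-1}
      have chain : ∀ t : ℕ, ∀ hk : (i : ℕ) + t < n,
          ((φ ⟨pderiv ⟨(i : ℕ) + t, hk⟩, canL _⟩ : L) : DerPn K n) ∈ U K n ((i : ℕ) + t + 2) := by
        intro t
        induction t with
        | zero =>
            intro hk
            have hdi : (⟨pderiv ⟨(i : ℕ) + 0, hk⟩, canL _⟩ : L) = d := by
              apply Subtype.ext
              rw [hd]
              have hfin : (⟨(i : ℕ) + 0, hk⟩ : Fin n) = i := Fin.ext (by simp)
              rw [hfin]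
            rw [hdi]
            exact hDdU
        | succ t iht =>
            intro hk
            have hk' : (i : ℕ) + t < n := by omega
            set k' : Fin n := ⟨(i : ℕ) + t, hk'⟩ with hk'def
            set k1 : Fin n := ⟨(i : ℕ) + t + 1, by omega⟩ with hk1def
            have hXmem : (X k' : Pn K n) ∈ Psub K n (k1 : ℕ) :=
              X_mem_psub (show (i : ℕ) + t < (i : ℕ) + t + 1 by omega)
            have heL : ((X k' : Pn K n) • (pderiv k1 : DerPn K n) : DerPn K n) ∈ L :=
              memL.mpr (smul_pderiv_mem_U1 hXmem)
            set e : L := ⟨(X k' : Pn K n) • (pderiv k1 : DerPn K n), heL⟩ with hedef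
            have hbr : (⟨pderiv ⟨(i : ℕ) + (t + 1), hk⟩, canL _⟩ : L) = ⁅(⟨pderiv k', canL k'⟩ : L), e⁆ := by
              apply Subtype.ext
              show (pderiv _ : DerPn K n) = ⁅(pderiv k' : DerPn K n), _⁆
              rw [bracket_pderiv_X_smul (k := (i : ℕ) + t) (by omega) k' k1 rfl rfl]
              congr 1
            rw [hbr, LieHom.map_lie]
            have hmem1 : ((φ ⟨pderiv k', canL k'⟩ : L) : DerPn K n) ∈ U K n ((i : ℕ) + t + 2) := iht hk'
            have hmem2 : ((φ e : L) : DerPn K n) ∈ U K n ((i : ℕ) + t + 2) := by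
              apply derived_le_U ((i : ℕ) + t + 1)
              apply phiD
              show ((X k' : Pn K n) • (pderiv k1 : DerPn K n) : DerPn K n) ∈ _
              exact smul_pderiv_mem_derived ((i : ℕ) + t + 1) k1 (le_of_eq rfl) (X k') hXmem
            have hb := bracket_mem_U hmem1 hmem2
            rw [min_self] at hb
            have : ((⁅φ ⟨pderiv k', canL k'⟩, φ e⁆ : L) : DerPn K n)
                = ⁅((φ ⟨pderiv k', canL k'⟩ : L) : DerPn K n), ((φ e : L) : DerPn K n)⁆ := rfl
            rw [this]
            have harith : (i : ℕ) + (t + 1) + 2 = (i : ℕ) + t + 2 + 1 := by omega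
            rw [harith]
            exact hb
      -- contradiction at the top
      have htop := chain (n - 1 - (i : ℕ)) (by omega)
      have htop' : ((φ ⟨pderiv ⟨(i : ℕ) + (n - 1 - (i : ℕ)), by omega⟩, canL _⟩ : L) : DerPn K n)
          ∈ U K n (n + 1) := by
        convert htop using 2
        omega
      have hzero : (φ ⟨pderiv ⟨(i : ℕ) + (n - 1 - (i : ℕ)), by omega⟩, canL _⟩ : L) = 0 := by
        apply Subtype.ext
        exact eq_zero_of_mem_U_top htop'
      have h00 : (⟨pderiv ⟨(i : ℕ) + (n - 1 - (i : ℕ)), by omega⟩, canL _⟩ : L) = 0 := by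
        apply hφ
        rw [hzero, map_zero]
      have h01 : (pderiv ⟨(i : ℕ) + (n - 1 - (i : ℕ)), by omega⟩ : DerPn K n) = 0 :=
        congrArg Subtype.val h00
      have h02 := congrArg (fun D : DerPn K n => D (X ⟨(i : ℕ) + (n - 1 - (i : ℕ)), by omega⟩)) h01
      simp only [pderiv_X_self, Derivation.zero_apply] at h02
      exact one_ne_zero h02
    · -- membership of u in U (i+2)
      intro m
      constructor
      · have hm1 : ((φ d : L) : DerPn K n) (X m) ∈ Psub K n m := (hPhiU m).1
        have hm2 : (c • pderiv i : DerPn K n) (X m) ∈ Psub K n m := by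
          rw [Derivation.smul_apply]
          exact Subalgebra.smul_mem _ ((pderiv_mem_U1 i) m).1 c
        rw [Derivation.sub_apply]
        exact Subalgebra.sub_mem _ hm1 hm2
      · intro hm
        rw [Derivation.sub_apply, Derivation.smul_apply]
        by_cases him : m = i
        · subst him
          rw [pderiv_X_self, hc, smul_eq_C_mul, mul_one, sub_self]
        · have hmi : (m : ℕ) ≠ (i : ℕ) := fun he => him (Fin.ext he)
          rw [(hPhiU m).2 (by omega), pderiv_X_of_ne him, smul_zero, sub_zero]
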